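/- Let X and Y be complex Banach spaces that are isomorphic as Banach spaces (there is a bounded linear bijection T : Y → X with bounded inverse). If every element of A_u(B_X) is a uniform limit on B_X of finite type polynomials on X (i.e. A_u(B_X) = A(B_X)), then every element of A_u(B_Y) is a uniform limit on B_Y of finite type polynomials on Y (i.e. A_u(B_Y) = A(B_Y)). -/

import Mathlib

open Metric Filter Topology

namespace ClusterValue

variable (X : Type*) [NormedAddCommGroup X] [NormedSpace ℂ X]

/-- Membership in `A_u(B)`: analytic on the open unit ball, bounded there,
and uniformly continuous there. -/
def MemAu (f : X → ℂ) : Prop :=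
  AnalyticOn ℂ f (ball (0 : X) 1) ∧ (∃ C : ℝ, ∀ x ∈ ball (0 : X) 1, ‖f x‖ ≤ C) ∧
    UniformContinuousOn f (ball (0 : X) 1)

/-- Membership in `H^∞(B)`: analytic on the open unit ball and bounded there. -/
def MemHinf (f : X → ℂ) : Prop :=
  AnalyticOn ℂ f (ball (0 : X) 1) ∧ (∃ C : ℝ, ∀ x ∈ ball (0 : X) 1, ‖f x‖ ≤ C)

/-- A character (nonzero continuous multiplicative linear functional) of the algebra
of functions on the open unit ball of `X` determined by the membership predicate `Mem`.
Functions are identified when they agree on the ball. -/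
structure Character (Mem : (X → ℂ) → Prop) : Type _ where
  toFun : (X → ℂ) → ℂ
  congr' : ∀ f g, Mem f → Mem g → (∀ x ∈ ball (0 : X) 1, f x = g x) → toFun f = toFun g
  map_add' : ∀ f g, Mem f → Mem g → toFun (f + g) = toFun f + toFun g
  map_mul' : ∀ f g, Mem f → Mem g → toFun (f * g) = toFun f * toFun g
  map_smul' : ∀ (c : ℂ) (f), Mem f → toFun (c • f) = c * toFun f
  map_one' : toFun 1 = 1
  continuous' : ∃ C : ℝ, ∀ (f : X → ℂ) (M : ℝ), Mem f →
    (∀ x ∈ ball (0 : X) 1, ‖f x‖ ≤ M) → ‖toFun f‖ ≤ C * M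

variable {X}

/-- The fiber over `0`: characters annihilating all continuous linear functionals. -/
def Character.inFiberZero {Mem : (X → ℂ) → Prop} (τ : Character X Mem) : Prop :=
  ∀ φ : X →L[ℂ] ℂ, τ.toFun ⇑φ = 0

/-- The fiber over `x'' ∈ X**`. -/
def Character.inFiber {Mem : (X → ℂ) → Prop} (τ : Character X Mem)
    (x'' : (X →L[ℂ] ℂ) →L[ℂ] ℂ) : Prop :=
  ∀ φ : X →L[ℂ] ℂ, τ.toFun ⇑φ = x'' φ

variable (X)

/-- The cluster set of `f` at `0`: limits of `f` along weakly null nets (filters) in the ball. -/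
def clusterSetZero (f : X → ℂ) : Set ℂ :=
  {z | ∃ l : Filter X, l.NeBot ∧ l ≤ 𝓟 (ball (0 : X) 1) ∧
    (∀ φ : X →L[ℂ] ℂ, Tendsto (fun x => φ x) l (𝓝 0)) ∧ Tendsto f l (𝓝 z)}

/-- The cluster set of `f` at `x'' ∈ X**`: limits of `f` along nets in the ball converging
weak-star to `x''`. -/
def clusterSet (f : X → ℂ) (x'' : (X →L[ℂ] ℂ) →L[ℂ] ℂ) : Set ℂ :=
  {z | ∃ l : Filter X, l.NeBot ∧ l ≤ 𝓟 (ball (0 : X) 1) ∧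
    (∀ φ : X →L[ℂ] ℂ, Tendsto (fun x => φ x) l (𝓝 (x'' φ))) ∧ Tendsto f l (𝓝 z)}

/-- A finite rank (bounded linear) operator. -/
def FiniteRank (S : X →L[ℂ] X) : Prop :=
  FiniteDimensional ℂ ↥(LinearMap.range (S : X →ₗ[ℂ] X))

/-- Finite type polynomials: the subalgebra of functions generated by the
continuous linear functionals (and constants). -/
def IsFiniteTypePoly (p : X → ℂ) : Prop :=
  p ∈ Algebra.adjoin ℂ (Set.range fun φ : X →L[ℂ] ℂ => (⇑φ : X → ℂ))

/-- Membership in `A(B)`: uniform limits on the ball of finite type polynomials. -/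
def MemA (f : X → ℂ) : Prop :=
  ∀ ε > (0 : ℝ), ∃ p : X → ℂ, IsFiniteTypePoly X p ∧ ∀ x ∈ ball (0 : X) 1, ‖f x - p x‖ ≤ ε

/-- A continuous polynomial: a finite sum of (diagonals of) continuous multilinear maps. -/
def IsContPoly (p : X → ℂ) : Prop :=
  ∃ (N : ℕ) (M : ∀ k : ℕ, ContinuousMultilinearMap ℂ (fun _ : Fin k => X) ℂ),
    ∀ x, p x = ∑ k ∈ Finset.range N, M k (fun _ => x)

end ClusterValue

namespace ClusterValueAux

open ClusterValue Metric

variable {X Y : Type*} [NormedAddCommGroup X] [NormedSpace ℂ X]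
  [NormedAddCommGroup Y] [NormedSpace ℂ Y]

lemma ftp_comp {p : X → ℂ} (hp : IsFiniteTypePoly X p) (L : Y →L[ℂ] X) :
    IsFiniteTypePoly Y (fun y => p (L y)) := by
  unfold IsFiniteTypePoly at hp ⊢
  induction hp using Algebra.adjoin_induction with
  | mem q hq =>
    obtain ⟨φ, rfl⟩ := hq
    exact Algebra.subset_adjoin ⟨φ.comp L, rfl⟩
  | algebraMap c => exact Subalgebra.algebraMap_mem _ c
  | add q1 q2 h1 h2 ih1 ih2 => exact add_mem ih1 ih2
  | mul q1 q2 h1 h2 ih1 ih2 => exact mul_mem ih1 ih2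

lemma homog_of_mem_closure {m : X → ℂ}
    (hm : m ∈ Submonoid.closure (Set.range fun φ : X →L[ℂ] ℂ => (⇑φ : X → ℂ))) :
    ∃ n : ℕ, ∀ (c : ℂ) (x : X), m (c • x) = c ^ n * m x := by
  induction hm using Submonoid.closure_induction with
  | mem m hm =>
    obtain ⟨φ, rfl⟩ := hm
    exact ⟨1, fun c x => by simp⟩
  | one => exact ⟨0, fun c x => by simp⟩
  | mul a b ha hb iha ihb =>
    obtain ⟨n1, h1⟩ := iha
    obtain ⟨n2, h2⟩ := ihb
    refine ⟨n1 + n2, fun c x => ?_⟩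
    simp only [Pi.mul_apply, h1, h2, pow_add]
    ring

lemma ftp_decomp {p : X → ℂ} (hp : IsFiniteTypePoly X p) :
    ∃ (d : ℕ) (q : ℕ → X → ℂ),
      (∀ j, IsFiniteTypePoly X (q j)) ∧
      (∀ (j : ℕ) (c : ℂ) (x : X), q j (c • x) = c ^ j * q j x) ∧
      (∀ j, d ≤ j → q j = 0) ∧
      (∀ x, p x = ∑ j ∈ Finset.range d, q j x) := by
  have hp' : p ∈ Submodule.span ℂ
      (Submonoid.closure (Set.range fun φ : X →L[ℂ] ℂ => (⇑φ : X → ℂ)) : Set (X → ℂ)) := by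
    rw [← Algebra.adjoin_eq_span]; exact hp
  clear hp
  induction hp' using Submodule.span_induction with
  | mem m hm =>
    have hft : IsFiniteTypePoly X m := by
      have hle : Submonoid.closure (Set.range fun φ : X →L[ℂ] ℂ => (⇑φ : X → ℂ)) ≤
          (Algebra.adjoin ℂ (Set.range fun φ : X →L[ℂ] ℂ => (⇑φ : X → ℂ))).toSubmonoid :=
        Submonoid.closure_le.mpr Algebra.subset_adjoin
      exact hle hm
    obtain ⟨n, hn⟩ := homog_of_mem_closure hm
    refine ⟨n + 1, fun j => if j = n then m else 0, fun j => ?_, fun j c x => ?_,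
      fun j hj => ?_, fun x => ?_⟩
    · by_cases h : j = n
      · simpa [h] using hft
      · show IsFiniteTypePoly X (if j = n then m else 0)
        rw [if_neg h]; exact Subalgebra.zero_mem _
    · by_cases h : j = n
      · simp [h, hn]
      · simp [h]
    · have : j ≠ n := by omega
      simp [this]
    · have hmem : n ∈ Finset.range (n + 1) := Finset.self_mem_range_succ n
      rw [Finset.sum_eq_single n (fun j _ hj => by simp [hj]) (fun h => absurd hmem h)]
      simp
  | zero =>
    exact ⟨0, fun _ => 0, fun j => Subalgebra.zero_mem _, fun j c x => by simp,
      fun j _ => rfl, fun x => by simp⟩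
  | add p1 p2 h1 h2 ih1 ih2 =>
    obtain ⟨d1, q1, hq1f, hq1h, hq1z, hq1s⟩ := ih1
    obtain ⟨d2, q2, hq2f, hq2h, hq2z, hq2s⟩ := ih2
    refine ⟨max d1 d2, fun j => q1 j + q2 j, fun j => add_mem (hq1f j) (hq2f j),
      fun j c x => ?_, fun j hj => ?_, fun x => ?_⟩
    · simp only [Pi.add_apply, hq1h, hq2h]; ring
    · show q1 j + q2 j = 0
      rw [hq1z j (le_trans (le_max_left _ _) hj), hq2z j (le_trans (le_max_right _ _) hj)]
      simp
    · have e1 : ∑ j ∈ Finset.range (max d1 d2), q1 j x = ∑ j ∈ Finset.range d1, q1 j x :=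
        (Finset.sum_subset (Finset.range_subset_range.mpr (le_max_left _ _))
          (fun j _ hj => by rw [hq1z j (by simpa using hj)]; rfl)).symm
      have e2 : ∑ j ∈ Finset.range (max d1 d2), q2 j x = ∑ j ∈ Finset.range d2, q2 j x :=
        (Finset.sum_subset (Finset.range_subset_range.mpr (le_max_right _ _))
          (fun j _ hj => by rw [hq2z j (by simpa using hj)]; rfl)).symm
      simp only [Pi.add_apply, Finset.sum_add_distrib, e1, e2, hq1s x, hq2s x]
  | smul c p1 h1 ih1 =>
    obtain ⟨d, q, hqf, hqh, hqz, hqs⟩ := ih1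
    refine ⟨d, fun j => c • q j, fun j => Subalgebra.smul_mem _ (hqf j) c,
      fun j c' x => ?_, fun j hj => ?_, fun x => ?_⟩
    · simp only [Pi.smul_apply, smul_eq_mul, hqh]; ring
    · show c • q j = 0
      rw [hqz j hj]; simp
    · simp only [Pi.smul_apply, smul_eq_mul, hqs x, Finset.mul_sum]

end ClusterValueAux

namespace ClusterValueAux2

open Complex

lemma circleIntegrable_zpow_mul (n : ℤ) (a : ℂ) {ρ : ℝ} (hρ : 0 < ρ) :
    CircleIntegrable (fun z : ℂ => z ^ n * a) 0 ρ := by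
  have h : CircleIntegrable (fun z : ℂ => (z - 0) ^ n) 0 ρ := by
    rw [circleIntegrable_sub_zpow_iff]
    right; right
    simp [abs_of_pos hρ, hρ.ne]
  unfold CircleIntegrable at h ⊢
  simpa [sub_zero] using h.mul_const a

lemma circleIntegral_finset_sum {ι : Type*} (s : Finset ι) (f : ι → ℂ → ℂ) {c : ℂ} {R : ℝ}
    (h : ∀ i ∈ s, CircleIntegrable (f i) c R) :
    (∮ z in C(c, R), ∑ i ∈ s, f i z) = ∑ i ∈ s, ∮ z in C(c, R), f i z := by
  simp only [circleIntegral]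
  rw [← intervalIntegral.integral_finset_sum (fun i hi => (h i hi).out)]
  congr 1
  funext θ
  rw [Finset.smul_sum]

/-- The Cauchy coefficients of a polynomial (along a ray) are its coefficients. -/
lemma coeff_cauchy_poly (d k : ℕ) (a : ℕ → ℂ) {ρ : ℝ} (hρ : 0 < ρ)
    (hz : ∀ j, d ≤ j → a j = 0) :
    (cauchyPowerSeries (fun t => ∑ j ∈ Finset.range d, t ^ j * a j) 0 ρ).coeff k = a k := by
  have hcoeff : (cauchyPowerSeries (fun t => ∑ j ∈ Finset.range d, t ^ j * a j) 0 ρ).coeff k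
      = (2 * ↑Real.pi * I : ℂ)⁻¹ • ∮ z in C(0, ρ),
          ((1:ℂ) / (z - 0)) ^ k • (z - 0)⁻¹ • ∑ j ∈ Finset.range d, z ^ j * a j :=
    cauchyPowerSeries_apply _ 0 ρ k 1
  rw [hcoeff]
  have hcong : (∮ z in C(0, ρ), ((1:ℂ) / (z - 0)) ^ k • (z - 0)⁻¹ •
        ∑ j ∈ Finset.range d, z ^ j * a j)
      = ∮ z in C(0, ρ), ∑ j ∈ Finset.range d, z ^ ((j : ℤ) - k - 1) * a j := by
    refine circleIntegral.integral_congr hρ.le (fun z hz' => ?_)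
    have hz0 : z ≠ 0 := by
      intro h0
      rw [mem_sphere_zero_iff_norm, h0, norm_zero] at hz'
      exact hρ.ne' hz'.symm
    simp only [sub_zero, smul_eq_mul, Finset.mul_sum]
    refine Finset.sum_congr rfl (fun j _ => ?_)
    rw [zpow_sub₀ hz0, zpow_sub₀ hz0, zpow_natCast, zpow_natCast, zpow_one]
    field_simp
    rw [one_div, inv_pow, mul_comm _ (a j), mul_assoc, inv_mul_cancel₀ (pow_ne_zero _ hz0), mul_one]
  rw [hcong]
  rw [circleIntegral_finset_sum _ _ (fun j _ => circleIntegrable_zpow_mul _ _ hρ)]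
  have hval : ∀ j ∈ Finset.range d,
      (∮ z in C(0, ρ), z ^ ((j : ℤ) - k - 1) * a j)
        = if j = k then (2 * ↑Real.pi * I) * a k else 0 := by
    intro j hj
    have : (∮ z in C(0, ρ), z ^ ((j : ℤ) - k - 1) * a j)
        = (∮ z in C(0, ρ), (z - 0) ^ ((j : ℤ) - k - 1)) • a j := by
      rw [← circleIntegral.integral_smul_const]
      simp [smul_eq_mul]
    rw [this]
    by_cases hjk : j = k
    · subst hjk
      have : ((j : ℤ) - j - 1) = -1 := by ring
      rw [this]
      have h2 : (∮ z in C(0, ρ), (z - 0) ^ (-1 : ℤ)) = 2 * ↑Real.pi * I := by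
        have := circleIntegral.integral_sub_inv_of_mem_ball
          (c := (0:ℂ)) (w := 0) (R := ρ) (by simpa using hρ)
        simpa [zpow_neg_one] using this
      rw [h2, smul_eq_mul, if_pos rfl]
    · have hne : ((j : ℤ) - k - 1) ≠ -1 := by
        intro hcon
        apply hjk
        omega
      rw [circleIntegral.integral_sub_zpow_of_ne hne, if_neg hjk, zero_smul]
  rw [Finset.sum_congr rfl hval]
  by_cases hk : k < d
  · rw [Finset.sum_ite_eq' (Finset.range d) k (fun _ => 2 * ↑Real.pi * I * a k)]
    rw [if_pos (Finset.mem_range.mpr hk)]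
    have hπ : (2 * ↑Real.pi * I : ℂ) ≠ 0 := by
      simp [Real.pi_ne_zero, I_ne_zero]
    rw [smul_eq_mul, ← mul_assoc, inv_mul_cancel₀ hπ, one_mul]
  · rw [Finset.sum_ite_eq' (Finset.range d) k (fun _ => 2 * ↑Real.pi * I * a k)]
    rw [if_neg (by simpa using hk), hz k (le_of_not_gt hk), smul_zero]

/-- Difference bound for Cauchy coefficients. -/
lemma coeff_cauchy_sub_le (f g : ℂ → ℂ) {ρ : ℝ} (hρ : 0 < ρ) (k : ℕ)
    (hf : ContinuousOn f (sphere (0:ℂ) ρ)) (hg : ContinuousOn g (sphere (0:ℂ) ρ))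
    {ε : ℝ} (hfg : ∀ z ∈ sphere (0:ℂ) ρ, ‖f z - g z‖ ≤ ε) :
    ‖(cauchyPowerSeries f 0 ρ).coeff k - (cauchyPowerSeries g 0 ρ).coeff k‖
      ≤ ρ⁻¹ ^ k * ε := by
  have hz0 : ∀ z ∈ sphere (0:ℂ) ρ, z ≠ 0 := by
    intro z hz h0
    rw [mem_sphere_zero_iff_norm, h0, norm_zero] at hz
    exact hρ.ne' hz.symm
  have habs : ∀ z ∈ sphere (0:ℂ) ρ, ‖z‖ = ρ := fun z hz => mem_sphere_zero_iff_norm.mp hz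
  set F : ℂ → ℂ := fun z => ((1:ℂ) / (z - 0)) ^ k • (z - 0)⁻¹ • f z with hF
  set G : ℂ → ℂ := fun z => ((1:ℂ) / (z - 0)) ^ k • (z - 0)⁻¹ • g z with hG
  have hFi : CircleIntegrable F 0 ρ := by
    apply ContinuousOn.circleIntegrable hρ.le
    have : ContinuousOn (fun z : ℂ => ((1:ℂ) / (z - 0)) ^ k * (z - 0)⁻¹) (sphere (0:ℂ) ρ) := by
      apply ContinuousOn.mul
      · exact (ContinuousOn.div continuousOn_const
          (continuousOn_id.sub continuousOn_const)
          (fun z hz => sub_ne_zero.mpr (by simpa using hz0 z hz))).pow k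
      · exact ContinuousOn.inv₀ (continuousOn_id.sub continuousOn_const)
          (fun z hz => sub_ne_zero.mpr (by simpa using hz0 z hz))
    simpa [F, smul_eq_mul, mul_assoc, Pi.mul_def] using this.mul hf
  have hGi : CircleIntegrable G 0 ρ := by
    apply ContinuousOn.circleIntegrable hρ.le
    have : ContinuousOn (fun z : ℂ => ((1:ℂ) / (z - 0)) ^ k * (z - 0)⁻¹) (sphere (0:ℂ) ρ) := by
      apply ContinuousOn.mul
      · exact (ContinuousOn.div continuousOn_const
          (continuousOn_id.sub continuousOn_const)
          (fun z hz => sub_ne_zero.mpr (by simpa using hz0 z hz))).pow k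
      · exact ContinuousOn.inv₀ (continuousOn_id.sub continuousOn_const)
          (fun z hz => sub_ne_zero.mpr (by simpa using hz0 z hz))
    simpa [G, smul_eq_mul, mul_assoc, Pi.mul_def] using this.mul hg
  have h1 : (cauchyPowerSeries f 0 ρ).coeff k = (2 * ↑Real.pi * I : ℂ)⁻¹ • ∮ z in C(0, ρ), F z :=
    cauchyPowerSeries_apply f 0 ρ k 1
  have h2 : (cauchyPowerSeries g 0 ρ).coeff k = (2 * ↑Real.pi * I : ℂ)⁻¹ • ∮ z in C(0, ρ), G z :=
    cauchyPowerSeries_apply g 0 ρ k 1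
  rw [h1, h2, ← smul_sub, ← circleIntegral.integral_sub hFi hGi]
  have hbound : ‖∮ z in C(0, ρ), (F z - G z)‖ ≤ 2 * Real.pi * ρ * (ρ⁻¹ ^ (k+1) * ε) := by
    apply circleIntegral.norm_integral_le_of_norm_le_const hρ.le
    intro z hz
    have : F z - G z = ((1:ℂ) / (z - 0)) ^ k • (z - 0)⁻¹ • (f z - g z) := by
      simp only [F, G, smul_sub]
    rw [this]
    rw [norm_smul, norm_smul, norm_pow, norm_div, norm_one, norm_inv]
    simp only [sub_zero]
    rw [habs z hz]
    calc (1 / ρ) ^ k * (ρ⁻¹ * ‖f z - g z‖)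
        ≤ (1 / ρ) ^ k * (ρ⁻¹ * ε) := by
          apply mul_le_mul_of_nonneg_left
          · exact mul_le_mul_of_nonneg_left (hfg z hz) (by positivity)
          · positivity
      _ = ρ⁻¹ ^ (k+1) * ε := by rw [one_div, pow_succ]; ring
  rw [norm_smul]
  have hnrm : ‖(2 * ↑Real.pi * I : ℂ)⁻¹‖ = (2 * Real.pi)⁻¹ := by
    rw [norm_inv]
    have : ‖(2 * ↑Real.pi * I : ℂ)‖ = 2 * Real.pi := by
      rw [norm_mul, norm_mul, Complex.norm_I, Complex.norm_ofNat, Complex.norm_real]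
      rw [Real.norm_eq_abs, _root_.abs_of_nonneg Real.pi_pos.le]
      ring
    rw [this]
  rw [hnrm]
  calc (2 * Real.pi)⁻¹ * ‖∮ z in C(0, ρ), (F z - G z)‖
      ≤ (2 * Real.pi)⁻¹ * (2 * Real.pi * ρ * (ρ⁻¹ ^ (k+1) * ε)) := by
        apply mul_le_mul_of_nonneg_left hbound (by positivity)
    _ = ρ⁻¹ ^ k * ε := by
        rw [pow_succ]
        field_simp

end ClusterValueAux2

open Metric Filter Topology ClusterValue in
/-- If `A_u(B_X) = A(B_X)` (every uniformly continuous bounded analytic function on the ball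
of `X` is a uniform limit of finite type polynomials) and `Y` is isomorphic to `X` as a
Banach space, then `A_u(B_Y) = A(B_Y)`. -/
theorem statement9 {X Y : Type*} [NormedAddCommGroup X] [NormedSpace ℂ X]
    [NormedAddCommGroup Y] [NormedSpace ℂ Y]
    (T : Y ≃L[ℂ] X)
    (hX : ∀ f : X → ℂ, MemAu X f → MemA X f) :
    ∀ g : Y → ℂ, MemAu Y g → MemA Y g := by
  classical
  rintro g ⟨hga, ⟨C0, hC0⟩, hgu⟩ ε hε
  have hgc : ContinuousOn g (ball (0 : Y) 1) := hga.continuousOn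
  have hgd : DifferentiableOn ℂ g (ball (0 : Y) 1) := hga.differentiableOn
  set C : ℝ := max C0 0 with hCdef
  have hC : ∀ y ∈ ball (0 : Y) 1, ‖g y‖ ≤ C := fun y hy => (hC0 y hy).trans (le_max_left _ _)
  have hCnn : 0 ≤ C := le_max_right _ _
  obtain ⟨δ, hδ0, hδ⟩ := Metric.uniformContinuousOn_iff.mp hgu (ε / 4) (by positivity)
  set r : ℝ := 1 - min δ 1 / 2 with hrdef
  have hmin0 : 0 < min δ 1 := lt_min hδ0 one_pos
  have hmin1 : min δ 1 ≤ 1 := min_le_right _ _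
  have hminδ : min δ 1 ≤ δ := min_le_left _ _
  have hr0 : 0 < r := by rw [hrdef]; linarith
  have hr1 : r < 1 := by rw [hrdef]; linarith
  have h1r : 1 - r = min δ 1 / 2 := by rw [hrdef]; ring
  have h1r0 : 0 < 1 - r := by rw [h1r]; linarith
  obtain ⟨N, hN⟩ := exists_pow_lt_of_lt_one
    (show (0:ℝ) < ε / 4 * (1 - r) / (C + 1) by positivity) hr1
  set Ts : X →L[ℂ] Y := (T.symm : X →L[ℂ] Y) with hTsdef
  set Tf : Y →L[ℂ] X := (T : Y →L[ℂ] X) with hTfdef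
  set a : ℝ := ‖Ts‖ + 1 with hadef
  have ha0 : 0 < a := by positivity
  set L : X →L[ℂ] Y := ((a : ℂ))⁻¹ • Ts with hLdef
  have hLnorm : ∀ x : X, ‖L x‖ ≤ a⁻¹ * ‖Ts‖ * ‖x‖ := by
    intro x
    rw [hLdef]
    simp only [ContinuousLinearMap.smul_apply, norm_smul, norm_inv, Complex.norm_real,
      Real.norm_eq_abs, abs_of_pos ha0]
    rw [mul_assoc]
    exact mul_le_mul_of_nonneg_left (Ts.le_opNorm x) (by positivity)
  have hLlt : ∀ x : X, ‖x‖ ≤ 1 → ‖L x‖ < 1 := by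
    intro x hx
    have hTa : ‖Ts‖ < a := by rw [hadef]; linarith
    calc ‖L x‖ ≤ a⁻¹ * ‖Ts‖ * ‖x‖ := hLnorm x
      _ ≤ a⁻¹ * ‖Ts‖ * 1 := mul_le_mul_of_nonneg_left hx (by positivity)
      _ < a⁻¹ * a * 1 := by
          have := mul_lt_mul_of_pos_left hTa (inv_pos.mpr ha0)
          linarith
      _ = 1 := by rw [inv_mul_cancel₀ ha0.ne', one_mul]
  have hLmaps : Set.MapsTo (⇑L) (ball (0:X) 1) (ball (0:Y) 1) := by
    intro x hx
    rw [mem_ball_zero_iff] at hx ⊢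
    exact hLlt x hx.le
  set h : X → ℂ := fun x => g (L x) with hhdef
  have hha : AnalyticOn ℂ h (ball (0:X) 1) := hga.comp (L.analyticOn _) hLmaps
  have hhb : ∀ x ∈ ball (0:X) 1, ‖h x‖ ≤ C := fun x hx => hC _ (hLmaps hx)
  have hhu : UniformContinuousOn h (ball (0:X) 1) := by
    rw [Metric.uniformContinuousOn_iff]
    intro ε' hε'
    obtain ⟨δ', hδ'0, hδ'⟩ := Metric.uniformContinuousOn_iff.mp hgu ε' hε'
    refine ⟨δ' / (a⁻¹ * ‖Ts‖ + 1), by positivity, ?_⟩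
    intro x1 hx1 x2 hx2 hd
    apply hδ' _ (hLmaps hx1) _ (hLmaps hx2)
    rw [dist_eq_norm] at hd ⊢
    rw [← map_sub]
    calc ‖L (x1 - x2)‖ ≤ a⁻¹ * ‖Ts‖ * ‖x1 - x2‖ := hLnorm _
      _ ≤ (a⁻¹ * ‖Ts‖ + 1) * ‖x1 - x2‖ :=
          mul_le_mul_of_nonneg_right (by linarith) (norm_nonneg _)
      _ < (a⁻¹ * ‖Ts‖ + 1) * (δ' / (a⁻¹ * ‖Ts‖ + 1)) :=
          mul_lt_mul_of_pos_left hd (by positivity)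
      _ = δ' := by
          rw [mul_div_cancel₀]
          positivity
  set R : ℝ := a * ‖Tf‖ + 1 with hRdef
  have hR1 : 1 ≤ R := by
    have : 0 ≤ a * ‖Tf‖ := by positivity
    rw [hRdef]; linarith
  have hR0 : 0 < R := by linarith
  set ρ : ℝ := R⁻¹ with hρdef
  have hρ0 : 0 < ρ := inv_pos.mpr hR0
  have hρ1 : ρ ≤ 1 := by
    rw [hρdef]
    exact inv_le_one_of_one_le₀ hR1
  set ε₁ : ℝ := ε / 4 * ρ ^ N / (N + 1) with hε₁def
  have hε₁0 : 0 < ε₁ := by positivity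
  obtain ⟨p, hpft, hp⟩ := hX h ⟨hha, ⟨C, hhb⟩, hhu⟩ ε₁ hε₁0
  obtain ⟨d, q, hqft, hqhom, hqzero, hqsum⟩ := ClusterValueAux.ftp_decomp hpft
  set M : Y →L[ℂ] X := (a : ℂ) • Tf with hMdef
  refine ⟨fun y => ∑ k ∈ Finset.range N, (r : ℂ) ^ k * q k (M y), ?_, ?_⟩
  · have heq : (fun y => ∑ k ∈ Finset.range N, (r : ℂ) ^ k * q k (M y))
        = ∑ k ∈ Finset.range N, ((r : ℂ) ^ k • fun y => q k (M y)) := by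
      funext y
      simp [Finset.sum_apply]
    unfold ClusterValue.IsFiniteTypePoly
    rw [heq]
    exact Subalgebra.sum_mem _
      (fun k _ => Subalgebra.smul_mem _ (ClusterValueAux.ftp_comp (hqft k) M) _)
  · intro y hy
    rw [mem_ball_zero_iff] at hy
    set x : X := M y with hxdef
    have hLx : L x = y := by
      rw [hLdef, hxdef, hMdef]
      simp only [ContinuousLinearMap.smul_apply]
      rw [map_smul]
      have hay : Ts (Tf y) = y := by
        rw [hTsdef, hTfdef]
        simp
      rw [hay, smul_smul, inv_mul_cancel₀, one_smul]
      exact_mod_cast ha0.ne'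
    have hxnorm : ‖x‖ < R := by
      have h1 : ‖x‖ = a * ‖Tf y‖ := by
        rw [hxdef, hMdef]
        simp [norm_smul, abs_of_pos ha0]
      have h2 : ‖Tf y‖ ≤ ‖Tf‖ * ‖y‖ := Tf.le_opNorm y
      have h4 : ‖Tf y‖ ≤ ‖Tf‖ := h2.trans (mul_le_of_le_one_right (norm_nonneg _) hy.le)
      have h5 : a * ‖Tf y‖ ≤ a * ‖Tf‖ := mul_le_mul_of_nonneg_left h4 ha0.le
      rw [h1, hRdef]
      linarith
    have hρx : ρ * ‖x‖ < 1 := by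
      calc ρ * ‖x‖ < ρ * R := mul_lt_mul_of_pos_left hxnorm hρ0
        _ = 1 := by rw [hρdef, inv_mul_cancel₀ hR0.ne']
    set F : ℂ → ℂ := fun t => g (t • y) with hFdef
    have hmapsF : ∀ t : ℂ, ‖t‖ ≤ 1 → t • y ∈ ball (0:Y) 1 := by
      intro t ht
      rw [mem_ball_zero_iff, norm_smul]
      calc ‖t‖ * ‖y‖ ≤ 1 * ‖y‖ := mul_le_mul_of_nonneg_right ht (norm_nonneg _)
        _ = ‖y‖ := one_mul _
        _ < 1 := hy
    have hFd : DifferentiableOn ℂ F (closedBall (0:ℂ) 1) := by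
      apply DifferentiableOn.comp (t := ball (0:Y) 1) hgd
      · exact (differentiable_id.smul_const y).differentiableOn
      · intro t ht
        exact hmapsF t (by rwa [mem_closedBall_zero_iff] at ht)
    have hFd' : DifferentiableOn ℂ F (closedBall (0:ℂ) ((1:NNReal):ℝ)) := by
      simpa using hFd
    have h1 : HasFPowerSeriesOnBall F (cauchyPowerSeries F 0 ((1:NNReal):ℝ)) 0 (1:NNReal) :=
      hFd'.hasFPowerSeriesOnBall one_pos
    set A : ℕ → ℂ := fun k => (cauchyPowerSeries F 0 ((1:NNReal):ℝ)).coeff k with hAdef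
    have hFcont : ∀ s : Set ℂ, (∀ z ∈ s, ‖z‖ ≤ 1) → ContinuousOn F s := by
      intro s hs
      apply hgc.comp (Continuous.continuousOn (continuous_id.smul continuous_const))
      intro z hz
      exact hmapsF z (hs z hz)
    have hAle : ∀ k, ‖A k‖ ≤ C := by
      intro k
      have h0 : (cauchyPowerSeries (fun t : ℂ => ∑ j ∈ Finset.range 0, t ^ j * (0:ℂ))
          0 ((1:NNReal):ℝ)).coeff k = 0 :=
        ClusterValueAux2.coeff_cauchy_poly 0 k (fun _ => 0) (by norm_num) (fun _ _ => rfl)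
      have hble := ClusterValueAux2.coeff_cauchy_sub_le F
          (fun t : ℂ => ∑ j ∈ Finset.range 0, t ^ j * (0:ℂ))
          (show (0:ℝ) < ((1:NNReal):ℝ) by norm_num) k
          (hFcont _ (fun z hz => le_of_eq (by simpa using mem_sphere_zero_iff_norm.mp hz)))
          (by simpa using (continuousOn_const :
            ContinuousOn (fun _ : ℂ => (0:ℂ)) (sphere (0:ℂ) ((1:NNReal):ℝ))))
          (ε := C) (fun z hz => by
            simp only [Finset.range_zero, Finset.sum_empty, sub_zero]
            have hz1 : ‖z‖ = ((1:NNReal):ℝ) := mem_sphere_zero_iff_norm.mp hz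
            exact hC _ (hmapsF z (le_of_eq (by simpa using hz1))))
      rw [h0, sub_zero] at hble
      calc ‖A k‖ ≤ (((1:NNReal):ℝ))⁻¹ ^ k * C := hble
        _ = C := by norm_num
    have hsum : HasSum (fun n => (r:ℂ) ^ n • A n) (F r) := by
      have hnn : ‖(r:ℂ)‖ < 1 := by
        rw [Complex.norm_real, Real.norm_eq_abs, abs_of_pos hr0]
        exact hr1
      have hmem : (r:ℂ) ∈ Metric.eball (0:ℂ) (1:NNReal) := by
        rw [mem_emetric_ball_zero_iff]
        exact_mod_cast hnn
      have hs := h1.hasSum hmem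
      simp only [FormalMultilinearSeries.apply_eq_pow_smul_coeff, zero_add] at hs
      exact hs
    have hsummable := hsum.summable
    have htailEq : F r - ∑ k ∈ Finset.range N, (r:ℂ) ^ k • A k
        = ∑' i : ℕ, (r:ℂ) ^ (i + N) • A (i + N) := by
      have h2 := Summable.sum_add_tsum_nat_add (f := fun n => (r:ℂ) ^ n • A n) N hsummable
      rw [hsum.tsum_eq] at h2
      rw [sub_eq_iff_eq_add']
      exact h2.symm
    have htail : ‖∑' i : ℕ, (r:ℂ) ^ (i + N) • A (i + N)‖ ≤ C * r ^ N * (1 - r)⁻¹ := by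
      have hgeo : HasSum (fun i : ℕ => C * r ^ N * r ^ i) (C * r ^ N * (1 - r)⁻¹) :=
        (hasSum_geometric_of_lt_one hr0.le hr1).mul_left _
      apply tsum_of_norm_bounded hgeo
      intro i
      rw [norm_smul, norm_pow, Complex.norm_real, Real.norm_eq_abs, abs_of_pos hr0]
      calc r ^ (i + N) * ‖A (i + N)‖ ≤ r ^ (i + N) * C :=
            mul_le_mul_of_nonneg_left (hAle _) (by positivity)
        _ = C * r ^ N * r ^ i := by rw [pow_add]; ring
    have hcmp : ∀ k, ‖A k - q k x‖ ≤ ρ⁻¹ ^ k * ε₁ := by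
      intro k
      have hcoe : ((ρ.toNNReal : ℝ)) = ρ := Real.coe_toNNReal _ hρ0.le
      have hFdρ : DifferentiableOn ℂ F (closedBall (0:ℂ) ((ρ.toNNReal : ℝ))) := by
        apply hFd.mono
        apply closedBall_subset_closedBall
        rw [hcoe]
        exact hρ1
      have h2 : HasFPowerSeriesOnBall F (cauchyPowerSeries F 0 ((ρ.toNNReal:ℝ))) 0 ρ.toNNReal :=
        hFdρ.hasFPowerSeriesOnBall (by simpa [Real.toNNReal_pos] using hρ0)
      have hrad : A k = (cauchyPowerSeries F 0 ρ).coeff k := by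
        have hq := h1.hasFPowerSeriesAt.eq_formalMultilinearSeries h2.hasFPowerSeriesAt
        rw [hcoe] at hq
        simp only [hAdef, hq]
      have hPrayq : (cauchyPowerSeries (fun t : ℂ => ∑ j ∈ Finset.range d, t ^ j * q j x)
          0 ρ).coeff k = q k x :=
        ClusterValueAux2.coeff_cauchy_poly d k (fun j => q j x) hρ0
          (fun j hj => by show q j x = 0; rw [hqzero j hj]; rfl)
      have hsphere : ∀ z ∈ sphere (0:ℂ) ρ,
          ‖F z - (fun t : ℂ => ∑ j ∈ Finset.range d, t ^ j * q j x) z‖ ≤ ε₁ := by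
        intro z hz
        have hzn : ‖z‖ = ρ := mem_sphere_zero_iff_norm.mp hz
        have hzx : z • x ∈ ball (0:X) 1 := by
          rw [mem_ball_zero_iff, norm_smul, hzn]; exact hρx
        have hFz : F z = h (z • x) := by
          show g (z • y) = g (L (z • x))
          rw [map_smul, hLx]
        have hPz : (fun t : ℂ => ∑ j ∈ Finset.range d, t ^ j * q j x) z = p (z • x) := by
          show ∑ j ∈ Finset.range d, z ^ j * q j x = p (z • x)
          rw [hqsum (z • x)]
          exact Finset.sum_congr rfl (fun j _ => (hqhom j z x).symm)
        rw [hFz, hPz]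
        exact hp _ hzx
      have hFcρ : ContinuousOn F (sphere (0:ℂ) ρ) :=
        hFcont _ (fun z hz => by rw [mem_sphere_zero_iff_norm.mp hz]; exact hρ1)
      have hPc : ContinuousOn (fun t : ℂ => ∑ j ∈ Finset.range d, t ^ j * q j x)
          (sphere (0:ℂ) ρ) :=
        Continuous.continuousOn
          (continuous_finset_sum _ (fun j _ => (continuous_pow j).mul continuous_const))
      have hble := ClusterValueAux2.coeff_cauchy_sub_le F
        (fun t : ℂ => ∑ j ∈ Finset.range d, t ^ j * q j x) hρ0 k hFcρ hPc hsphere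
      rw [hPrayq] at hble
      rw [hrad]
      exact hble
    show ‖g y - ∑ k ∈ Finset.range N, (r:ℂ) ^ k * q k x‖ ≤ ε
    have hyball : y ∈ ball (0:Y) 1 := mem_ball_zero_iff.mpr hy
    have hterm1 : ‖g y - F (r:ℂ)‖ ≤ ε / 4 := by
      have hry : (r:ℂ) • y ∈ ball (0:Y) 1 := hmapsF _ (by
        rw [Complex.norm_real, Real.norm_eq_abs, abs_of_pos hr0]; exact hr1.le)
      have hdist : dist y ((r:ℂ) • y) < δ := by
        rw [dist_eq_norm]
        have he : y - (r:ℂ) • y = ((1:ℂ) - (r:ℂ)) • y := by rw [sub_smul, one_smul]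
        rw [he, norm_smul]
        have hn : ‖(1:ℂ) - (r:ℂ)‖ = 1 - r := by
          rw [show ((1:ℂ) - (r:ℂ)) = ((1 - r : ℝ) : ℂ) by push_cast; ring]
          rw [Complex.norm_real, Real.norm_eq_abs, abs_of_pos h1r0]
        rw [hn]
        calc (1 - r) * ‖y‖ ≤ (1 - r) * 1 := mul_le_mul_of_nonneg_left hy.le h1r0.le
          _ = min δ 1 / 2 := by rw [mul_one, h1r]
          _ < min δ 1 := by linarith
          _ ≤ δ := hminδ
      have hd := hδ y hyball ((r:ℂ) • y) hry hdist
      rw [dist_eq_norm] at hd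
      exact le_of_lt hd
    have hterm2 : ‖F (r:ℂ) - ∑ k ∈ Finset.range N, (r:ℂ) ^ k • A k‖ ≤ ε / 4 := by
      rw [htailEq]
      refine htail.trans (le_of_lt ?_)
      have hC1 : (0:ℝ) < C + 1 := by linarith
      have h4 : 0 ≤ r ^ N * (1 - r)⁻¹ := by positivity
      calc C * r ^ N * (1 - r)⁻¹ = C * (r ^ N * (1 - r)⁻¹) := by ring
        _ ≤ (C+1) * (r ^ N * (1 - r)⁻¹) := mul_le_mul_of_nonneg_right (by linarith) h4
        _ = (C+1) * r ^ N * (1 - r)⁻¹ := by ring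
        _ < (C+1) * (ε / 4 * (1 - r) / (C + 1)) * (1 - r)⁻¹ :=
            mul_lt_mul_of_pos_right (mul_lt_mul_of_pos_left hN hC1) (by positivity)
        _ = ε / 4 := by field_simp
    have hterm3 : ‖(∑ k ∈ Finset.range N, (r:ℂ) ^ k • A k)
        - ∑ k ∈ Finset.range N, (r:ℂ) ^ k * q k x‖ ≤ ε / 4 := by
      rw [← Finset.sum_sub_distrib]
      refine (norm_sum_le _ _).trans ?_
      have hone : (1:ℝ) ≤ ρ⁻¹ := (one_le_inv₀ hρ0).mpr hρ1
      have hbd : ∀ k ∈ Finset.range N, ‖(r:ℂ) ^ k • A k - (r:ℂ) ^ k * q k x‖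
          ≤ ρ⁻¹ ^ N * ε₁ := by
        intro k hk
        have he : (r:ℂ) ^ k • A k - (r:ℂ) ^ k * q k x = (r:ℂ) ^ k * (A k - q k x) := by
          rw [smul_eq_mul]; ring
        rw [he, norm_mul, norm_pow, Complex.norm_real, Real.norm_eq_abs, abs_of_pos hr0]
        have h1' : r ^ k ≤ 1 := pow_le_one₀ hr0.le hr1.le
        have h3' : ρ⁻¹ ^ k ≤ ρ⁻¹ ^ N :=
          pow_le_pow_right₀ hone (le_of_lt (Finset.mem_range.mp hk))
        calc r ^ k * ‖A k - q k x‖ ≤ 1 * (ρ⁻¹ ^ k * ε₁) :=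
              mul_le_mul h1' (hcmp k) (norm_nonneg _) zero_le_one
          _ = ρ⁻¹ ^ k * ε₁ := one_mul _
          _ ≤ ρ⁻¹ ^ N * ε₁ := mul_le_mul_of_nonneg_right h3' hε₁0.le
      refine (Finset.sum_le_sum hbd).trans ?_
      rw [Finset.sum_const, Finset.card_range, nsmul_eq_mul]
      have hcancel : ρ⁻¹ ^ N * ρ ^ N = 1 := by
        rw [← mul_pow, inv_mul_cancel₀ hρ0.ne', one_pow]
      have hNN : (0:ℝ) < (N:ℝ) + 1 := by positivity
      calc (N:ℝ) * (ρ⁻¹ ^ N * ε₁)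
          = (N:ℝ)/((N:ℝ)+1) * (ε/4) * (ρ⁻¹ ^ N * ρ ^ N) := by
            rw [hε₁def]; push_cast; ring
        _ = (N:ℝ)/((N:ℝ)+1) * (ε/4) := by rw [hcancel, mul_one]
        _ ≤ 1 * (ε/4) := by
            apply mul_le_mul_of_nonneg_right _ (by positivity)
            rw [div_le_one hNN]; linarith
        _ = ε/4 := one_mul _
    calc ‖g y - ∑ k ∈ Finset.range N, (r:ℂ) ^ k * q k x‖
        = ‖(g y - F (r:ℂ)) + (F (r:ℂ) - ∑ k ∈ Finset.range N, (r:ℂ) ^ k • A k)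
            + ((∑ k ∈ Finset.range N, (r:ℂ) ^ k • A k)
              - ∑ k ∈ Finset.range N, (r:ℂ) ^ k * q k x)‖ := by
          congr 1
          ring
      _ ≤ ‖g y - F (r:ℂ)‖ + ‖F (r:ℂ) - ∑ k ∈ Finset.range N, (r:ℂ) ^ k • A k‖
            + ‖(∑ k ∈ Finset.range N, (r:ℂ) ^ k • A k)
              - ∑ k ∈ Finset.range N, (r:ℂ) ^ k * q k x‖ := norm_add₃_le
      _ ≤ ε/4 + ε/4 + ε/4 := add_le_add (add_le_add hterm1 hterm2) hterm3
      _ ≤ ε := by linarith
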